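/- Let R be a 2-torsion free prime ring with involution * of the second kind (Z(R) ∩ S(R) ≠ {0}), and let d₁ and d₂ be nonzero derivations of R. Then [d₁(x), x*] + [x, d₂(x*)] ∈ Z(R) for all x ∈ R if and only if R is an integral domain; likewise, [d₁(x), x*] − [x, d₂(x*)] ∈ Z(R) for all x ∈ R if and only if R is an integral domain. -/

import Mathlib

namespace S3

variable {R : Type*} [Ring R]

def IsC (z : R) : Prop := ∀ u : R, z * u = u * z

theorem isc_add {a b : R} (ha : IsC a) (hb : IsC b) : IsC (a + b) := fun u => by
  rw [add_mul, mul_add, ha u, hb u]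

theorem isc_sub {a b : R} (ha : IsC a) (hb : IsC b) : IsC (a - b) := fun u => by
  rw [sub_mul, mul_sub, ha u, hb u]

theorem isc_mul {a b : R} (ha : IsC a) (hb : IsC b) : IsC (a * b) := fun u => by
  rw [mul_assoc, hb u, ← mul_assoc, ha u, mul_assoc]

theorem isc_ofEq {a b : R} (h : a = b) (hb : IsC b) : IsC a := h ▸ hb

theorem cancel_central (hprime : ∀ a b : R, (∀ r : R, a * r * b = 0) → a = 0 ∨ b = 0)
    {z a : R} (hz : IsC z) (hz0 : z ≠ 0) (h : z * a = 0) : a = 0 := by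
  rcases hprime z a (fun r => by rw [hz r, mul_assoc, h, mul_zero]) with h' | h'
  · exact absurd h' hz0
  · exact h'

theorem isc_cancel (hprime : ∀ a b : R, (∀ r : R, a * r * b = 0) → a = 0 ∨ b = 0)
    {z a : R} (hz : IsC z) (hz0 : z ≠ 0) (h : IsC (z * a)) : IsC a := by
  intro u
  have key : z * (a * u - u * a) = 0 := by
    have h1 := h u
    have h2 := hz u
    linear_combination (norm := noncomm_ring) h1 - h2 * a
  exact sub_eq_zero.mp (cancel_central hprime hz hz0 key)

theorem isc_half (h2tor : ∀ a : R, 2 * a = 0 → a = 0) {a : R} (h : IsC (2 * a)) : IsC a := by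
  intro u
  have key : 2 * (a * u - u * a) = 0 := by
    have h1 := h u
    linear_combination (norm := noncomm_ring) h1
  exact sub_eq_zero.mp (h2tor _ key)

theorem comm_of_central_comm (hprime : ∀ a b : R, (∀ r : R, a * r * b = 0) → a = 0 ∨ b = 0)
    (h : ∀ x y : R, IsC (x * y - y * x)) : ∀ x y : R, x * y = y * x := by
  intro x y
  have h1 : IsC (x * y - y * x) := h x y
  have h2 : IsC ((x * y - y * x) * x) := isc_ofEq (by noncomm_ring) (h x (y * x))
  have h3 : (x * y - y * x) * (x * y - y * x) = 0 := by
    have e1 := h2 y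
    have e2 := h1 y
    linear_combination (norm := noncomm_ring) e1 - e2 * x
  have h4 : ∀ r : R, (x * y - y * x) * r * (x * y - y * x) = 0 := fun r => by
    rw [h1 r, mul_assoc, h3, mul_zero]
  rcases hprime _ _ h4 with h' | h' <;> exact sub_eq_zero.mp h'

section Deriv

variable (d : R → R)

theorem dzero (hdadd : ∀ x y : R, d (x + y) = d x + d y) : d 0 = 0 := by
  have h := hdadd 0 0
  rw [add_zero] at h
  exact (left_eq_add.mp h)

theorem dneg (hdadd : ∀ x y : R, d (x + y) = d x + d y) : ∀ a : R, d (-a) = -d a := by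
  intro a
  have h := hdadd a (-a)
  rw [add_neg_cancel, dzero d hdadd] at h
  exact eq_neg_of_add_eq_zero_right h.symm

theorem dsub (hdadd : ∀ x y : R, d (x + y) = d x + d y) :
    ∀ a b : R, d (a - b) = d a - d b := by
  intro a b
  rw [sub_eq_add_neg, hdadd, dneg d hdadd, sub_eq_add_neg]

theorem dcentral (hdadd : ∀ x y : R, d (x + y) = d x + d y)
    (hdmul : ∀ x y : R, d (x * y) = d x * y + x * d y)
    {z : R} (hz : IsC z) : IsC (d z) := by
  intro r
  have h1 := (hdmul z r).symm
  have h2 := hdmul r z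
  have h3 : d (z * r) = d (r * z) := by rw [hz r]
  have h4 := hz (d r)
  linear_combination (norm := noncomm_ring) h1 + h3 + h2 - h4

end Deriv

theorem comm_of_commuting_deriv
    (hprime : ∀ a b : R, (∀ r : R, a * r * b = 0) → a = 0 ∨ b = 0)
    (d : R → R)
    (hdadd : ∀ x y : R, d (x + y) = d x + d y)
    (hdmul : ∀ x y : R, d (x * y) = d x * y + x * d y)
    (hdne : ∃ x : R, d x ≠ 0)
    (hcomm : ∀ x : R, d x * x = x * d x) : ∀ a b : R, a * b = b * a := by
  have lin : ∀ x y : R, d x * y + d y * x = x * d y + y * d x := by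
    intro x y
    have h1 := hcomm (x + y)
    rw [hdadd] at h1
    linear_combination (norm := noncomm_ring) h1 - hcomm x - hcomm y
  have step2 : ∀ x y : R, d x * (y * x - x * y) = 0 := by
    intro x y
    have e1 := lin x (x * y)
    rw [hdmul] at e1
    have e2 := lin x y
    have e3 := hcomm x
    linear_combination (norm := noncomm_ring) e1 - x * e2 - 2 * (e3 * y)
  have step3 : ∀ x y r : R, d x * r * (y * x - x * y) = 0 := by
    intro x y r
    have e1 := step2 x (r * y)
    have e2 := step2 x r
    linear_combination (norm := noncomm_ring) e1 - e2 * y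
  have step4 : ∀ x : R, d x = 0 ∨ ∀ y : R, y * x = x * y := by
    intro x
    rcases Classical.em (∀ y : R, y * x = x * y) with h | h
    · exact Or.inr h
    · left
      push_neg at h
      obtain ⟨y, hy⟩ := h
      rcases hprime (d x) (y * x - x * y) (fun r => step3 x y r) with h' | h'
      · exact h'
      · exact absurd (sub_eq_zero.mp h') hy
  obtain ⟨a, ha⟩ := hdne
  have haC : ∀ y : R, y * a = a * y := (step4 a).resolve_left ha
  intro p q
  rcases step4 p with h | h
  · have hpa : d (p + a) ≠ 0 := by rw [hdadd, h, zero_add]; exact ha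
    have hC := (step4 (p + a)).resolve_left hpa
    have h1 := hC q
    have h2 := haC q
    linear_combination (norm := noncomm_ring) h2 - h1
  · exact (h q).symm


theorem comm_of_deriv_comm_central
    (hprime : ∀ a b : R, (∀ r : R, a * r * b = 0) → a = 0 ∨ b = 0)
    (h2tor : ∀ a : R, 2 * a = 0 → a = 0)
    (d : R → R)
    (hdadd : ∀ x y : R, d (x + y) = d x + d y)
    (hdmul : ∀ x y : R, d (x * y) = d x * y + x * d y)
    (hdne : ∃ x : R, d x ≠ 0)
    (hZ : ∀ x y : R, IsC (d (x * y - y * x))) : ∀ a b : R, a * b = b * a := by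
  by_contra hnc
  have hncc : ¬ ∀ p q : R, IsC (p * q - q * p) :=
    fun hcc => hnc (comm_of_central_comm hprime hcc)
  simp only [IsC, not_forall] at hncc
  obtain ⟨w, v, u₁, hu⟩ := hncc
  have ht₀ : (w * v - v * w) * u₁ - u₁ * (w * v - v * w) ≠ 0 := sub_ne_zero.mpr hu
  have kill : ∀ z : R, IsC z →
      z * ((w * v - v * w) * u₁ - u₁ * (w * v - v * w)) = 0 → z = 0 := by
    intro z hz hz0
    rcases hprime z _ (fun r => by rw [hz r, mul_assoc, hz0, mul_zero]) with h | h
    · exact h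
    · exact absurd h ht₀
  -- d kills central elements
  have eZ0 : ∀ z : R, IsC z → d z = 0 := by
    intro z hz
    have hdzC : IsC (d z) := dcentral d hdadd hdmul hz
    have h1 : IsC (d (z * (w * v - v * w))) := by
      have e : z * (w * v - v * w) = w * (z * v) - (z * v) * w := by
        linear_combination (norm := noncomm_ring) hz w * v
      rw [show d (z * (w * v - v * w)) = d (w * (z * v) - (z * v) * w) from by rw [e]]
      exact hZ w (z * v)
    have h2 : IsC (d z * (w * v - v * w)) := by
      have e2 : d z * (w * v - v * w) = d (z * (w * v - v * w)) - z * d (w * v - v * w) := by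
        rw [hdmul]; noncomm_ring
      exact isc_ofEq e2 (isc_sub h1 (isc_mul hz (hZ w v)))
    refine kill _ hdzC ?_
    have h3 := h2 u₁
    have h4 := hdzC u₁
    linear_combination (norm := noncomm_ring) h3 - h4 * (w * v - v * w)
  have hLC : IsC (d (w * v - v * w)) := hZ w v
  -- commutator of c with d r is central
  have hMC : ∀ r : R, IsC ((w * v - v * w) * d r - d r * (w * v - v * w)) := by
    intro r
    have h1 : IsC (d ((w * v - v * w) * r - r * (w * v - v * w))) := hZ (w * v - v * w) r
    have h2 : (w * v - v * w) * d r - d r * (w * v - v * w)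
        = d ((w * v - v * w) * r - r * (w * v - v * w)) := by
      rw [dsub d hdadd, hdmul, hdmul]
      linear_combination (norm := noncomm_ring) - hLC r
    exact isc_ofEq h2 h1
  -- the W relation
  have hW : ∀ r : R, IsC (((w * v - v * w) * d r - d r * (w * v - v * w)) * (w * v - v * w)
      + ((w * v - v * w) * r - r * (w * v - v * w)) * d (w * v - v * w)) := by
    intro r
    have h1 : IsC (d ((w * v - v * w) * (r * (w * v - v * w))
        - (r * (w * v - v * w)) * (w * v - v * w))) := hZ (w * v - v * w) (r * (w * v - v * w))
    have h2 : ((w * v - v * w) * d r - d r * (w * v - v * w)) * (w * v - v * w)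
        + ((w * v - v * w) * r - r * (w * v - v * w)) * d (w * v - v * w)
        = d ((w * v - v * w) * (r * (w * v - v * w))
            - (r * (w * v - v * w)) * (w * v - v * w)) := by
      rw [dsub d hdadd ((w*v - v*w) * (r * (w*v - v*w))) ((r * (w*v - v*w)) * (w*v - v*w)),
        hdmul (w*v - v*w) (r * (w*v - v*w)), hdmul (r * (w*v - v*w)) (w*v - v*w),
        hdmul r (w*v - v*w)]
      linear_combination (norm := noncomm_ring) - hLC r * (w * v - v * w)
    exact isc_ofEq h2 h1
  -- 2 λ μ_r = 0
  have hML : ∀ r : R, ((w * v - v * w) * d r - d r * (w * v - v * w)) * d (w * v - v * w) = 0 := by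
    intro r
    have h0 := eZ0 _ (hW r)
    have h1 : d ((((w * v - v * w) * d r - d r * (w * v - v * w)) * (w * v - v * w))
        + (((w * v - v * w) * r - r * (w * v - v * w)) * d (w * v - v * w)))
        = 2 * (((w * v - v * w) * d r - d r * (w * v - v * w)) * d (w * v - v * w)) := by
      rw [hdadd, hdmul, hdmul, eZ0 _ (hMC r), eZ0 _ hLC,
        dsub d hdadd ((w*v - v*w) * r) (r * (w*v - v*w)), hdmul (w*v - v*w) r,
        hdmul r (w*v - v*w)]
      linear_combination (norm := noncomm_ring) hLC r * d (w * v - v * w)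
    rw [h1] at h0
    exact h2tor _ h0
  -- λ = 0
  have hL0 : d (w * v - v * w) = 0 := by
    by_contra hne
    have hM0 : ∀ r : R, (w * v - v * w) * d r - d r * (w * v - v * w) = 0 := by
      intro r
      have h1 : d (w * v - v * w) * ((w * v - v * w) * d r - d r * (w * v - v * w)) = 0 := by
        rw [← hMC r (d (w * v - v * w))]
        exact hML r
      exact cancel_central hprime hLC hne h1
    have hKC : ∀ r : R, IsC ((w * v - v * w) * r - r * (w * v - v * w)) := by
      intro r
      have h1 : IsC (((w * v - v * w) * r - r * (w * v - v * w)) * d (w * v - v * w)) :=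
        isc_ofEq (by rw [hM0 r]; noncomm_ring) (hW r)
      have h2 : IsC (d (w * v - v * w) * ((w * v - v * w) * r - r * (w * v - v * w))) :=
        isc_ofEq (hLC _) h1
      exact isc_cancel hprime hLC hne h2
    have hKK : ∀ r u : R, ((w * v - v * w) * r - r * (w * v - v * w))
        * ((w * v - v * w) * u - u * (w * v - v * w)) = 0 := by
      intro r u
      have h1 := hKC (r * (w * v - v * w))
      have h2 : IsC (((w * v - v * w) * r - r * (w * v - v * w)) * (w * v - v * w)) :=
        isc_ofEq (by noncomm_ring) h1
      have h3 := h2 u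
      have h4 := hKC r u
      linear_combination (norm := noncomm_ring) h3 - h4 * (w * v - v * w)
    exact ht₀ (kill _ (hKC u₁) (hKK u₁ u₁))
  -- μ_r = 0 : c commutes with d r
  have hM00 : ∀ r : R, (w * v - v * w) * d r = d r * (w * v - v * w) := by
    intro r
    have h1 : IsC (((w * v - v * w) * d r - d r * (w * v - v * w)) * (w * v - v * w)) :=
      isc_ofEq (by rw [hL0]; noncomm_ring) (hW r)
    have h2 : ((w * v - v * w) * d r - d r * (w * v - v * w))
        * ((w * v - v * w) * u₁ - u₁ * (w * v - v * w)) = 0 := by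
      have h3 := h1 u₁
      have h4 := hMC r u₁
      linear_combination (norm := noncomm_ring) h3 - h4 * (w * v - v * w)
    exact sub_eq_zero.mp (kill _ (hMC r) h2)
  -- Q0
  have hQ0 : ∀ p r : R, d p * ((w * v - v * w) * r - r * (w * v - v * w))
      + ((w * v - v * w) * p - p * (w * v - v * w)) * d r = 0 := by
    intro p r
    have h1 := hM00 (p * r)
    rw [hdmul] at h1
    have h2 := hM00 p
    have h3 := hM00 r
    linear_combination (norm := noncomm_ring) h1 - h2 * r - p * h3
  -- Q3
  have hQ3 : ∀ p t r : R, d p * t * ((w * v - v * w) * r - r * (w * v - v * w))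
      + ((w * v - v * w) * p - p * (w * v - v * w)) * t * d r = 0 := by
    intro p t r
    have h1 := hQ0 p (t * r)
    rw [hdmul] at h1
    have h2 := hQ0 p t
    linear_combination (norm := noncomm_ring) h1 - h2 * r
  -- vanishing on the centralizer of c
  have hvan : ∀ z : R, (w * v - v * w) * z = z * (w * v - v * w) → d z = 0 := by
    intro z hvz
    have h1 : ∀ t : R, d z * t * ((w * v - v * w) * u₁ - u₁ * (w * v - v * w)) = 0 := by
      intro t
      have h2 := hQ3 z t u₁
      have h3 : (w * v - v * w) * z - z * (w * v - v * w) = 0 := sub_eq_zero_of_eq hvz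
      rw [h3] at h2
      simpa using h2
    rcases hprime (d z) _ h1 with h | h
    · exact h
    · exact absurd h ht₀
  have hdd : ∀ r : R, d (d r) = 0 := fun r => hvan (d r) (hM00 r)
  have hdd2 : ∀ a b : R, d a * d b = 0 := by
    intro a b
    have h1 : d (d a * b + a * d b) = 0 := by rw [← hdmul]; exact hdd (a * b)
    rw [hdadd, hdmul, hdmul, hdd a, hdd b] at h1
    have h2 : 2 * (d a * d b) = 0 := by linear_combination (norm := noncomm_ring) h1
    exact h2tor _ h2
  have hdd3 : ∀ a t b : R, d a * t * d b = 0 := by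
    intro a t b
    have h1 : d a * d (t * b) = 0 := hdd2 a (t * b)
    rw [hdmul] at h1
    have h2 := hdd2 a t
    linear_combination (norm := noncomm_ring) h1 - h2 * b
  obtain ⟨a, ha⟩ := hdne
  rcases hprime (d a) (d a) (fun r => hdd3 a r a) with h | h <;> exact ha h


section Star
variable [StarRing R]

theorem comm_of_star_comm_central
    (hprime : ∀ a b : R, (∀ r : R, a * r * b = 0) → a = 0 ∨ b = 0)
    (h2tor : ∀ a : R, 2 * a = 0 → a = 0)
    {s : R} (hs : IsC s) (hss : star s = -s) (hs0 : s ≠ 0)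
    (h : ∀ x : R, IsC (x * star x - star x * x)) : ∀ a b : R, a * b = b * a := by
  have hs' : ∀ r : R, s * r = r * s := hs
  have lin : ∀ x y : R, IsC (x * star y - star y * x + (y * star x - star x * y)) := by
    intro x y
    have h1 := h (x + y)
    rw [star_add] at h1
    refine isc_ofEq ?_ (isc_sub (isc_sub h1 (h x)) (h y))
    noncomm_ring
  have key : ∀ x y : R, IsC (y * star x - star x * y) := by
    intro x y
    have h1 := lin x (y * s)
    rw [star_mul, hss, neg_mul] at h1
    have h4 : IsC ((x * star y - star y * x + (y * star x - star x * y)) * s) :=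
      isc_ofEq (hs _).symm (isc_mul hs (lin x y))
    have h5 : IsC (2 * ((y * star x - star x * y) * s)) := by
      refine isc_ofEq ?_ (isc_add h1 h4)
      simp only [neg_mul, mul_neg, neg_neg, mul_assoc, hs']
      noncomm_ring
    have h6 : IsC ((y * star x - star x * y) * s) := isc_half h2tor h5
    have h7 : IsC (s * (y * star x - star x * y)) := isc_ofEq (hs _) h6
    exact isc_cancel hprime hs hs0 h7
  have hall : ∀ a b : R, IsC (a * b - b * a) := by
    intro a b
    have h1 := key (star b) a
    rw [star_star] at h1
    exact h1
  exact comm_of_central_comm hprime hall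


theorem mainLemma
    (hprime : ∀ a b : R, (∀ r : R, a * r * b = 0) → a = 0 ∨ b = 0)
    (h2tor : ∀ a : R, 2 * a = 0 → a = 0)
    {s : R} (hs : IsC s) (hss : star s = -s) (hs0 : s ≠ 0)
    (d₁ d₂ : R → R)
    (hd₁_add : ∀ x y : R, d₁ (x + y) = d₁ x + d₁ y)
    (hd₁_mul : ∀ x y : R, d₁ (x * y) = d₁ x * y + x * d₁ y)
    (hd₂_add : ∀ x y : R, d₂ (x + y) = d₂ x + d₂ y)
    (hd₂_mul : ∀ x y : R, d₂ (x * y) = d₂ x * y + x * d₂ y)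
    (hd₁_ne : ∃ x : R, d₁ x ≠ 0)
    (H : ∀ x : R, IsC (d₁ x * star x - star x * d₁ x + (x * d₂ (star x) - d₂ (star x) * x))) :
    ∀ a b : R, a * b = b * a := by
  by_contra hnc
  have hncc : ¬ ∀ p q : R, IsC (p * q - q * p) :=
    fun hcc => hnc (comm_of_central_comm hprime hcc)
  simp only [IsC, not_forall] at hncc
  obtain ⟨p, q, u₁, hu⟩ := hncc
  have ht₀ : (p * q - q * p) * u₁ - u₁ * (p * q - q * p) ≠ 0 := sub_ne_zero.mpr hu
  have kill : ∀ z : R, IsC z →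
      z * ((p * q - q * p) * u₁ - u₁ * (p * q - q * p)) = 0 → z = 0 := by
    intro z hz hz0
    rcases hprime z _ (fun r => by rw [hz r, mul_assoc, hz0, mul_zero]) with h | h
    · exact h
    · exact absurd h ht₀
  have hs' : ∀ r : R, s * r = r * s := hs
  have hd₁neg : ∀ a : R, d₁ (-a) = -d₁ a := dneg d₁ hd₁_add
  have hd₂neg : ∀ a : R, d₂ (-a) = -d₂ a := dneg d₂ hd₂_add
  have hc1C : IsC (d₁ s) := dcentral d₁ hd₁_add hd₁_mul hs
  have hc2C : IsC (d₂ s) := dcentral d₂ hd₂_add hd₂_mul hs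
  have hc1' : ∀ r : R, d₁ s * r = r * d₁ s := hc1C
  have hc2' : ∀ r : R, d₂ s * r = r * d₂ s := hc2C
  -- linearized hypothesis
  have hB : ∀ x y : R, IsC (d₁ x * y - y * d₁ x
      + (d₁ (star y) * star x - star x * d₁ (star y))
      + (x * d₂ y - d₂ y * x)
      + (star y * d₂ (star x) - d₂ (star x) * star y)) := by
    intro x y
    have h1 := H (x + star y)
    rw [star_add, star_star, hd₁_add, hd₂_add] at h1
    have h3 := H (star y)
    rw [star_star] at h3
    refine isc_ofEq ?_ (isc_sub (isc_sub h1 (H x)) h3)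
    noncomm_ring
  -- relation (I)
  have hI : ∀ x y : R, IsC ((d₁ x * y - y * d₁ x + (x * d₂ y - d₂ y * x)) * (2 * s)
      + (x * y - y * x) * d₁ s - (star y * star x - star x * star y) * d₂ s) := by
    intro x y
    have h1 := hB (x * s) y
    rw [star_mul, hss, neg_mul, hd₂neg, hd₂_mul, hd₁_mul] at h1
    refine isc_ofEq ?_ (isc_add h1 (isc_mul hs (hB x y)))
    simp only [neg_mul, mul_neg, neg_neg, add_mul, mul_add, sub_mul, mul_sub, mul_assoc,
      hc1', hc2']
    simp only [mul_assoc, hs']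
    noncomm_ring
  -- relation (I')
  have hI' : ∀ x y : R, IsC ((d₁ x * y - y * d₁ x + (x * d₂ y - d₂ y * x)) * (2 * s)
      + (x * y - y * x) * d₂ s - (star y * star x - star x * star y) * d₁ s) := by
    intro x y
    have h1 := hB x (y * s)
    rw [star_mul, hss, neg_mul, hd₁neg, hd₁_mul, hd₂_mul] at h1
    refine isc_ofEq ?_ (isc_add h1 (isc_mul hs (hB x y)))
    simp only [neg_mul, mul_neg, neg_neg, add_mul, mul_add, sub_mul, mul_sub, mul_assoc,
      hc1', hc2']
    simp only [mul_assoc, hs']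
    noncomm_ring
  -- relation (A)
  have hA : ∀ x y : R, IsC ((x * y - y * x) * (s * d₁ s)
      + (star y * star x - star x * star y) * (s * d₂ s)) := by
    intro x y
    have h1 := hI (x * s) y
    rw [star_mul, hss, neg_mul, hd₁_mul] at h1
    refine isc_half h2tor (isc_ofEq ?_ (isc_sub h1 (isc_mul hs (hI x y))))
    simp only [neg_mul, mul_neg, neg_neg, add_mul, mul_add, sub_mul, mul_sub, mul_assoc,
      hc1', hc2']
    simp only [mul_assoc, hs']
    noncomm_ring
  -- relation (B)
  have hBB : ∀ x y : R, IsC (((x * y - y * x)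
      + (star y * star x - star x * star y)) * (s * d₂ s)) := by
    intro x y
    have h1 := hI x (y * s)
    rw [star_mul, hss, neg_mul, hd₂_mul] at h1
    refine isc_half h2tor (isc_ofEq ?_ (isc_sub h1 (isc_mul hs (hI x y))))
    simp only [neg_mul, mul_neg, neg_neg, add_mul, mul_add, sub_mul, mul_sub, mul_assoc,
      hc1', hc2']
    simp only [mul_assoc, hs']
    noncomm_ring
  -- δ₁ = δ₂
  have hδ : d₁ s = d₂ s := by
    have hz : IsC (s * (d₁ s - d₂ s)) := isc_mul hs (isc_sub hc1C hc2C)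
    have hcm : ∀ x y : R, IsC ((x * y - y * x) * (s * (d₁ s - d₂ s))) := by
      intro x y
      refine isc_ofEq ?_ (isc_sub (hA x y) (hBB x y))
      noncomm_ring
    have hz0 : s * (d₁ s - d₂ s) = 0 := by
      refine kill _ hz ?_
      have h2 := (hcm p q) u₁
      have h4 := hz (p * q - q * p)
      have h5 := hz (u₁ * (p * q - q * p))
      linear_combination (norm := noncomm_ring) h4 * u₁ + h2 - h5
    have := cancel_central hprime hs hs0 hz0
    exact sub_eq_zero.mp this
  by_cases hc2z : d₂ s = 0
  · -- second-kind derivative vanishes: T(x,y) is central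
    have hc1z : d₁ s = 0 := by rw [hδ, hc2z]
    have hT : ∀ x y : R, IsC (d₁ x * y - y * d₁ x + (x * d₂ y - d₂ y * x)) := by
      intro x y
      have h1 := hI x y
      rw [hc1z, hc2z, mul_zero, mul_zero, add_zero, sub_zero] at h1
      have h2 : IsC (2 * (s * (d₁ x * y - y * d₁ x + (x * d₂ y - d₂ y * x)))) := by
        refine isc_ofEq ?_ h1
        simp only [mul_assoc, hs']
        noncomm_ring
      exact isc_cancel hprime hs hs0 (isc_half h2tor h2)
    -- T(x,x) = 0
    have hτ : ∀ x : R, d₁ x * x - x * d₁ x + (x * d₂ x - d₂ x * x) = 0 := by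
      intro x
      have hτC := hT x x
      have h1 := hT x (x * x)
      rw [hd₂_mul] at h1
      have h2 : IsC (2 * ((d₁ x * x - x * d₁ x + (x * d₂ x - d₂ x * x)) * x)) := by
        refine isc_ofEq ?_ h1
        linear_combination (norm := noncomm_ring) hτC x
      have h3 := isc_half h2tor h2
      have h4 : ∀ u : R, (d₁ x * x - x * d₁ x + (x * d₂ x - d₂ x * x)) * (x * u - u * x) = 0 := by
        intro u
        have h5 := h3 u
        have h6 := hτC u
        linear_combination (norm := noncomm_ring) h5 - h6 * x
      rcases Classical.em (∀ u : R, x * u = u * x) with hx | hx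
      · have e1 := hx (d₁ x)
        have e2 := hx (d₂ x)
        linear_combination (norm := noncomm_ring) e2 - e1
      · push_neg at hx
        obtain ⟨u0, hu0⟩ := hx
        have h7 : ∀ r : R, (d₁ x * x - x * d₁ x + (x * d₂ x - d₂ x * x)) * r
            * (x * u0 - u0 * x) = 0 := by
          intro r
          rw [hτC r, mul_assoc, h4 u0, mul_zero]
        rcases hprime _ _ h7 with h | h
        · exact h
        · exact absurd (sub_eq_zero.mp h) hu0
    by_cases hD : ∀ x : R, d₁ x = d₂ x
    · -- d₁ = d₂ : use L6
      have hZc : ∀ x y : R, IsC (d₁ (x * y - y * x)) := by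
        intro x y
        refine isc_ofEq ?_ (hT x y)
        rw [dsub d₁ hd₁_add, hd₁_mul, hd₁_mul, hD y]
        noncomm_ring
      exact hnc (comm_of_deriv_comm_central hprime h2tor d₁ hd₁_add hd₁_mul hd₁_ne hZc)
    · -- d := d₁ - d₂ is a nonzero commuting derivation
      push_neg at hD
      obtain ⟨x0, hx0⟩ := hD
      refine hnc (comm_of_commuting_deriv hprime (fun t => d₁ t - d₂ t) ?_ ?_
        ⟨x0, sub_ne_zero.mpr hx0⟩ ?_)
      · intro a b; rw [hd₁_add, hd₂_add]; abel
      · intro a b; rw [hd₁_mul, hd₂_mul]; noncomm_ring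
      · intro t
        linear_combination (norm := noncomm_ring) hτ t
  · -- d₂ s ≠ 0 : [x, x*] is central, use L4
    have hsc2 : IsC (s * d₂ s) := isc_mul hs hc2C
    have hsc2ne : s * d₂ s ≠ 0 := fun h => hc2z (cancel_central hprime hs hs0 h)
    have hWc : ∀ x y : R, IsC ((x * y - y * x) + (star y * star x - star x * star y)) := by
      intro x y
      have h2 : IsC ((s * d₂ s) * ((x * y - y * x) + (star y * star x - star x * star y))) :=
        isc_ofEq (hsc2 _) (hBB x y)
      exact isc_cancel hprime hsc2 hsc2ne h2
    have hxx : ∀ x : R, IsC (x * star x - star x * x) := by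
      intro x
      have h1 := hWc x (star x)
      rw [star_star] at h1
      refine isc_half h2tor (isc_ofEq ?_ h1)
      noncomm_ring
    exact hnc (comm_of_star_comm_central hprime h2tor hs hss hs0 hxx)

end Star
end S3

/-- Corollary 2.
Let `R` be a 2-torsion free prime ring with involution `*` of the second kind
(`Z(R) ∩ S(R) ≠ {0}`), and let `d₁, d₂` be nonzero derivations of `R`.  Then
`[d₁(x), x*] ± [x, d₂(x*)] ∈ Z(R)` for all `x ∈ R` if and only if `R` is an
integral domain (for either choice of sign). -/
theorem statement3 {R : Type*} [Ring R] [StarRing R]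
    -- `R` is prime
    (hprime : ∀ a b : R, (∀ r : R, a * r * b = 0) → a = 0 ∨ b = 0)
    -- `R` is 2-torsion free
    (h2tor : ∀ a : R, 2 * a = 0 → a = 0)
    -- `*` is of the second kind
    (hsecond : ∃ s : R, (∀ r : R, s * r = r * s) ∧ star s = -s ∧ s ≠ 0)
    (d₁ d₂ : R → R)
    (hd₁_add : ∀ x y : R, d₁ (x + y) = d₁ x + d₁ y)
    (hd₁_mul : ∀ x y : R, d₁ (x * y) = d₁ x * y + x * d₁ y)
    (hd₂_add : ∀ x y : R, d₂ (x + y) = d₂ x + d₂ y)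
    (hd₂_mul : ∀ x y : R, d₂ (x * y) = d₂ x * y + x * d₂ y)
    (hd₁_ne : ∃ x : R, d₁ x ≠ 0) (hd₂_ne : ∃ x : R, d₂ x ≠ 0) :
    ((∀ x r : R,
        ((d₁ x * star x - star x * d₁ x) + (x * d₂ (star x) - d₂ (star x) * x)) * r
          = r * ((d₁ x * star x - star x * d₁ x) + (x * d₂ (star x) - d₂ (star x) * x)))
      ↔ ((0 : R) ≠ 1 ∧ (∀ a b : R, a * b = b * a) ∧
          (∀ a b : R, a * b = 0 → a = 0 ∨ b = 0)))
    ∧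
    ((∀ x r : R,
        ((d₁ x * star x - star x * d₁ x) - (x * d₂ (star x) - d₂ (star x) * x)) * r
          = r * ((d₁ x * star x - star x * d₁ x) - (x * d₂ (star x) - d₂ (star x) * x)))
      ↔ ((0 : R) ≠ 1 ∧ (∀ a b : R, a * b = b * a) ∧
          (∀ a b : R, a * b = 0 → a = 0 ∨ b = 0))) := by
  obtain ⟨s, hs, hss, hs0⟩ := hsecond
  have hsC : S3.IsC s := hs
  have mkRHS : (∀ a b : R, a * b = b * a) →
      ((0 : R) ≠ 1 ∧ (∀ a b : R, a * b = b * a) ∧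
        (∀ a b : R, a * b = 0 → a = 0 ∨ b = 0)) := by
    intro hcomm
    refine ⟨?_, hcomm, ?_⟩
    · intro h01
      obtain ⟨x, hx⟩ := hd₁_ne
      apply hx
      calc d₁ x = d₁ x * 1 := (mul_one _).symm
        _ = d₁ x * 0 := by rw [← h01]
        _ = 0 := mul_zero _
    · intro a b hab
      exact hprime a b (fun r => by rw [hcomm a r, mul_assoc, hab, mul_zero])
  constructor
  · constructor
    · intro hL
      refine mkRHS (S3.mainLemma hprime h2tor hsC hss hs0 d₁ d₂ hd₁_add hd₁_mul hd₂_add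
        hd₂_mul hd₁_ne ?_)
      intro x u
      have h1 := hL x u
      linear_combination (norm := noncomm_ring) h1
    · intro hR x r
      have hcomm := hR.2.1
      have hz : (d₁ x * star x - star x * d₁ x) + (x * d₂ (star x) - d₂ (star x) * x) = 0 := by
        have e1 := hcomm (d₁ x) (star x)
        have e2 := hcomm x (d₂ (star x))
        linear_combination (norm := noncomm_ring) e1 + e2
      rw [hz, zero_mul, mul_zero]
  · constructor
    · intro hL
      refine mkRHS (S3.mainLemma hprime h2tor hsC hss hs0 d₁ (fun t => -d₂ t) hd₁_add hd₁_mul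
        (fun a b => by rw [hd₂_add, neg_add]) 
        (fun a b => by rw [hd₂_mul]; noncomm_ring)
        hd₁_ne ?_)
      intro x u
      have h1 := hL x u
      linear_combination (norm := noncomm_ring) h1
    · intro hR x r
      have hcomm := hR.2.1
      have hz : (d₁ x * star x - star x * d₁ x) - (x * d₂ (star x) - d₂ (star x) * x) = 0 := by
        have e1 := hcomm (d₁ x) (star x)
        have e2 := hcomm x (d₂ (star x))
        linear_combination (norm := noncomm_ring) e1 - e2
      rw [hz, zero_mul, mul_zero]
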